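/- Let X be the graph on vertices v₁,...,v₇ with edges: {v₁,v₂}, {v₅,v₁}, a double edge between v₂ and v₃, {v₃,v₄}, {v₄,v₅}, {v₅,v₆}, {v₆,v₇}, {v₅,v₇} (so v₂v₃ is a pair of parallel edges and v₅,v₆,v₇ form a triangle attached at v₅). For each prime p and n ≥ 0, let X_n be the multigraph obtained from X by the degree-p^n cyclic branched cover with trivial voltage assignment, totally ramified exactly at v₄ and v₅ (i.e., X_n has one vertex over each of v₄, v₅ and p^n vertices over every other vertex, with p^n lifted copies of each edge). Then the number of spanning trees of X_n equals p^n · 27 · 21^{p^n − 1}. -/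

import Mathlib

structure Multigraph where
  V : Type
  E : Type
  [fintypeV : Fintype V]
  [fintypeE : Fintype E]
  [decEqV : DecidableEq V]
  ends : E → Sym2 V

attribute [instance] Multigraph.fintypeV Multigraph.fintypeE Multigraph.decEqV

namespace Multigraph

variable (G : Multigraph)

/-- Reachability in the spanning subgraph using only the edges in `S`. -/
def Reach (S : Set G.E) : G.V → G.V → Prop :=
  Relation.ReflTransGen (fun x y => ∃ e ∈ S, G.ends e = s(x, y))

/-- The multigraph is connected. -/
def Connected : Prop := ∀ x y : G.V, G.Reach Set.univ x y

/-- The edge set `S` is acyclic: every edge of `S` is a bridge of `S`. -/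
def IsForest (S : Finset G.E) : Prop :=
  ∀ e ∈ S, ∀ x y : G.V, G.ends e = s(x, y) → ¬ G.Reach ((↑S : Set G.E) \ {e}) x y

/-- `S` is the edge set of a spanning tree. -/
def IsSpanningTree (S : Finset G.E) : Prop :=
  G.IsForest S ∧ ∀ x y : G.V, G.Reach ↑S x y

/-- `S` is the edge set of a spanning 2-forest consisting of two trees, one
containing `u`, the other containing `v`, whose vertex sets partition the vertices. -/
def IsTwoForest (u v : G.V) (S : Finset G.E) : Prop :=
  G.IsForest S ∧ ¬ G.Reach ↑S u v ∧ ∀ x : G.V, G.Reach ↑S u x ∨ G.Reach ↑S v x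

/-- The number of spanning trees. -/
noncomputable def treeCount : ℕ :=
  Nat.card {S : Finset G.E // G.IsSpanningTree S}

/-- The number of spanning 2-forests separating `u` and `v`. -/
noncomputable def twoForestCount (u v : G.V) : ℕ :=
  Nat.card {S : Finset G.E // G.IsTwoForest u v S}

end Multigraph

/-- The lift of a base vertex to the sheet `τ` of the trivial-voltage branched cover:
ramified vertices (those satisfying `R`) have a single vertex above them, all other
vertices have `m` vertices above them. -/
def coverLift (G : Multigraph) (R : G.V → Prop) [DecidablePred R] (m : ℕ) (τ : Fin m)
    (v : G.V) : Σ v : G.V, Fin (if R v then 1 else m) :=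
  ⟨v, if h : R v then ⟨0, by simp [h]⟩ else ⟨τ.1, by simp [h, τ.isLt]⟩⟩

/-- The degree-`m` cyclic branched cover of `G` with trivial voltage assignment, totally
ramified exactly at the vertices satisfying `R`: there is one vertex over each ramified
vertex, `m` vertices over every other vertex, and `m` lifted copies of each edge. -/
def trivialCover (G : Multigraph) (R : G.V → Prop) [DecidablePred R] (m : ℕ) :
    Multigraph where
  V := Σ v : G.V, Fin (if R v then 1 else m)
  E := G.E × Fin m
  ends := fun e => (G.ends e.1).map (coverLift G R m e.2)

/-- The base graph `X` on vertices `v₁, …, v₇` (encoded as `Fin 7`, `v_i ↦ i - 1`) with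
edges `{v₁,v₂}`, `{v₅,v₁}`, a double edge `v₂v₃`, `{v₃,v₄}`, `{v₄,v₅}`, `{v₅,v₆}`,
`{v₆,v₇}`, `{v₅,v₇}`. -/
def X15 : Multigraph where
  V := Fin 7
  E := Fin 9
  ends := ![s(0, 1), s(4, 0), s(1, 2), s(1, 2), s(2, 3), s(3, 4), s(4, 5), s(5, 6), s(4, 6)]

namespace Multigraph

variable {G : Multigraph}

lemma reach_single {S : Set G.E} {e : G.E} {x y : G.V} (he : e ∈ S)
    (h : G.ends e = s(x, y)) : G.Reach S x y :=
  Relation.ReflTransGen.single ⟨e, he, h⟩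

lemma reach_single' {S : Set G.E} {e : G.E} {x y : G.V} (he : e ∈ S)
    (h : G.ends e = s(y, x)) : G.Reach S x y :=
  Relation.ReflTransGen.single ⟨e, he, by rw [h, Sym2.eq_swap]⟩

lemma step_symm {S : Set G.E} : Symmetric (fun x y => ∃ e ∈ S, G.ends e = s(x, y)) := by
  rintro a b ⟨e, he, h⟩
  exact ⟨e, he, by rw [h, Sym2.eq_swap]⟩

lemma reach_symm {S : Set G.E} {x y : G.V} (h : G.Reach S x y) : G.Reach S y x :=
  @Std.Symm.symm _ _ (@Relation.ReflTransGen.stdSymm _ _ ⟨fun _ _ hh => step_symm hh⟩) _ _ h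

lemma reach_trans {S : Set G.E} {x y z : G.V} (h : G.Reach S x y) (h' : G.Reach S y z) :
    G.Reach S x z := Relation.ReflTransGen.trans h h'

lemma reach_mono {S T : Set G.E} (hST : S ⊆ T) {x y : G.V} (h : G.Reach S x y) :
    G.Reach T x y := by
  refine Relation.ReflTransGen.mono ?_ _ _ h
  rintro a b ⟨e, he, h⟩; exact ⟨e, hST he, h⟩

lemma reach_empty {x y : G.V} (h : G.Reach ∅ x y) : x = y := by
  induction h with
  | refl => rfl
  | tail _ h ih => rcases h with ⟨e, he, -⟩; exact absurd he (Set.notMem_empty e)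

/-- decomposition of reachability after inserting an edge -/
lemma reach_insert {S : Set G.E} {e : G.E} {a b : G.V} (he : G.ends e = s(a, b))
    {x y : G.V} (h : G.Reach (insert e S) x y) :
    G.Reach S x y ∨ (G.Reach S x a ∧ G.Reach S b y) ∨ (G.Reach S x b ∧ G.Reach S a y) := by
  induction h with
  | refl => exact Or.inl Relation.ReflTransGen.refl
  | tail _ h ih =>
    rename_i c d _
    rcases h with ⟨f, hf, hends⟩
    rcases Set.mem_insert_iff.mp hf with rfl | hfS
    · -- f = e, so s(c,d) = s(a,b)
      rw [he] at hends
      rcases Sym2.eq_iff.mp hends with ⟨rfl, rfl⟩ | ⟨rfl, rfl⟩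
      · rcases ih with h1 | ⟨h1, h2⟩ | ⟨h1, h2⟩
        · exact Or.inr (Or.inl ⟨h1, Relation.ReflTransGen.refl⟩)
        · exact Or.inr (Or.inl ⟨h1, Relation.ReflTransGen.refl⟩)
        · exact Or.inl h1
      · rcases ih with h1 | ⟨h1, h2⟩ | ⟨h1, h2⟩
        · exact Or.inr (Or.inr ⟨h1, Relation.ReflTransGen.refl⟩)
        · exact Or.inl h1
        · exact Or.inr (Or.inr ⟨h1, Relation.ReflTransGen.refl⟩)
    · -- f ∈ S
      have hstep : G.Reach S c d := reach_single hfS hends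
      rcases ih with h1 | ⟨h1, h2⟩ | ⟨h1, h2⟩
      · exact Or.inl (reach_trans h1 hstep)
      · exact Or.inr (Or.inl ⟨h1, reach_trans h2 hstep⟩)
      · exact Or.inr (Or.inr ⟨h1, reach_trans h2 hstep⟩)

/-- rerouting: if the two endpoints of `e` are still connected without `e`,
then removing `e` does not change reachability. -/
lemma reach_reroute {S : Set G.E} {e : G.E} {a b : G.V} (he : G.ends e = s(a, b))
    (hd : G.Reach (S \ {e}) a b) {x y : G.V} (h : G.Reach S x y) :
    G.Reach (S \ {e}) x y := by
  induction h with
  | refl => exact Relation.ReflTransGen.refl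
  | tail _ h ih =>
    rename_i c d _
    rcases h with ⟨f, hf, hends⟩
    by_cases hfe : f = e
    · subst hfe
      rw [he] at hends
      rcases Sym2.eq_iff.mp hends with ⟨rfl, rfl⟩ | ⟨rfl, rfl⟩
      · exact reach_trans ih hd
      · exact reach_trans ih (reach_symm hd)
    · exact reach_trans ih (reach_single ⟨hf, hfe⟩ hends)

def reachSetoid (S : Finset G.E) : Setoid G.V :=
  ⟨G.Reach ↑S, ⟨fun _ => Relation.ReflTransGen.refl, reach_symm, reach_trans⟩⟩

lemma reach_coe_empty {x y : G.V} (h : G.Reach (↑(∅ : Finset G.E)) x y) : x = y :=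
  reach_empty (by simpa using h)

lemma card_le_card_add_ncomp (S : Finset G.E) :
    Fintype.card G.V ≤ S.card + Nat.card (Quotient (reachSetoid (G := G) S)) := by
  classical
  induction S using Finset.induction_on with
  | empty =>
    have : Quotient (reachSetoid (G := G) ∅) ≃ G.V :=
      { toFun := Quotient.lift id (fun a b h => reach_coe_empty h)
        invFun := fun v => Quotient.mk _ v
        left_inv := by rintro ⟨v⟩; rfl
        right_inv := fun v => rfl }
    rw [Nat.card_congr this, Nat.card_eq_fintype_card]
    simp
  | insert _ _ hnot ih =>
    rename_i e S
    rcases hSym : G.ends e with ⟨a, b⟩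
    have hab : G.ends e = s(a, b) := hSym
    have key : Nat.card (Quotient (reachSetoid (G := G) S)) ≤
        Nat.card (Quotient (reachSetoid (G := G) (insert e S))) + 1 := by
      have hwd : ∀ (v w : G.V), G.Reach (↑S) v w →
          (if G.Reach (↑S) v a then (Sum.inr Unit.unit : Quotient (reachSetoid (G := G) (insert e S)) ⊕ Unit)
           else Sum.inl (Quotient.mk _ v)) =
          (if G.Reach (↑S) w a then Sum.inr Unit.unit
           else Sum.inl (Quotient.mk _ w)) := by
        intro v w hvw
        by_cases hva : G.Reach (↑S) v a
        · rw [if_pos hva, if_pos (reach_trans (reach_symm hvw) hva)]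
        · rw [if_neg hva, if_neg (fun hwa => hva (reach_trans hvw hwa))]
          refine congrArg _ (Quotient.sound (reach_mono ?_ hvw))
          rw [Finset.coe_insert]
          exact Set.subset_insert _ _
      have hginj : Function.Injective (Quotient.lift _ hwd :
          Quotient (reachSetoid (G := G) S) →
          Quotient (reachSetoid (G := G) (insert e S)) ⊕ Unit) := by
        rintro ⟨v⟩ ⟨w⟩ hvw
        have hvw' : (if G.Reach (↑S) v a then (Sum.inr Unit.unit :
              Quotient (reachSetoid (G := G) (insert e S)) ⊕ Unit)
            else Sum.inl (Quotient.mk _ v)) =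
            (if G.Reach (↑S) w a then Sum.inr Unit.unit
            else Sum.inl (Quotient.mk _ w)) := hvw
        by_cases hva : G.Reach (↑S) v a <;> by_cases hwa : G.Reach (↑S) w a
        · exact Quotient.sound (reach_trans hva (reach_symm hwa))
        · rw [if_pos hva, if_neg hwa] at hvw'; exact absurd hvw' (by simp)
        · rw [if_neg hva, if_pos hwa] at hvw'; exact absurd hvw' (by simp)
        · rw [if_neg hva, if_neg hwa] at hvw'
          have h2 : G.Reach (↑(insert e S)) v w := Quotient.exact (Sum.inl.inj hvw')
          have h3 : G.Reach (insert e (↑S : Set G.E)) v w := by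
            rwa [Finset.coe_insert] at h2
          rcases reach_insert hab h3 with h1 | ⟨h1, h2⟩ | ⟨h1, h2⟩
          · exact Quotient.sound h1
          · exact absurd h1 hva
          · exact absurd (reach_symm h2) hwa
      calc Nat.card (Quotient (reachSetoid (G := G) S))
          ≤ Nat.card (Quotient (reachSetoid (G := G) (insert e S)) ⊕ Unit) :=
            Nat.card_le_card_of_injective _ hginj
        _ = Nat.card (Quotient (reachSetoid (G := G) (insert e S))) + 1 := by
            rw [Nat.card_sum]; simp
    calc Fintype.card G.V ≤ S.card + Nat.card (Quotient (reachSetoid (G := G) S)) := ih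
      _ ≤ S.card + (Nat.card (Quotient (reachSetoid (G := G) (insert e S))) + 1) :=
          Nat.add_le_add_left key _
      _ = (insert e S).card + Nat.card (Quotient (reachSetoid (G := G) (insert e S))) := by
          rw [Finset.card_insert_of_notMem hnot]; ring

lemma isForest_of_spanning_card [Nonempty G.V] (S : Finset G.E)
    (hspan : ∀ x y : G.V, G.Reach ↑S x y)
    (hcard : Fintype.card G.V = S.card + 1) : G.IsForest S := by
  classical
  intro e he x y hends hreach
  have hrr : ∀ a b : G.V, G.Reach (↑S \ {e}) a b := fun a b =>
    reach_reroute hends hreach (hspan a b)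
  have hco : ((↑S : Set G.E) \ {e}) = ↑(S.erase e) := by
    rw [Finset.coe_erase]
  have hspan' : ∀ a b : G.V, G.Reach ↑(S.erase e) a b := by
    intro a b; rw [← hco]; exact hrr a b
  have h1 : Nat.card (Quotient (reachSetoid (G := G) (S.erase e))) = 1 := by
    haveI : Subsingleton (Quotient (reachSetoid (G := G) (S.erase e))) := by
      constructor
      rintro ⟨u⟩ ⟨w⟩
      exact Quotient.sound (hspan' u w)
    haveI : Nonempty (Quotient (reachSetoid (G := G) (S.erase e))) :=
      Nonempty.map (Quotient.mk _) inferInstance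
    exact Nat.card_eq_one_iff_unique.mpr ⟨inferInstance, inferInstance⟩
  have h2 := card_le_card_add_ncomp (G := G) (S.erase e)
  rw [h1, Finset.card_erase_of_mem he] at h2
  have hS1 : 1 ≤ S.card := Finset.card_pos.mpr ⟨e, he⟩
  omega

end Multigraph

open Multigraph

instance (n : ℕ) [NeZero n] : OfNat X15.V n := inferInstanceAs (OfNat (Fin 7) n)
instance (n : ℕ) [NeZero n] : OfNat X15.E n := inferInstanceAs (OfNat (Fin 9) n)

attribute [reducible] X15 trivialCover

abbrev Cov (m : ℕ) : Multigraph := @trivialCover X15 (fun v : Fin 7 => v = 3 ∨ v = 4)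
  (fun v => @instDecidableOr _ _ (instDecidableEqFin 7 v 3) (instDecidableEqFin 7 v 4)) m


def L (m : ℕ) (τ : Fin m) (v : Fin 7) : (Cov m).V :=
  @coverLift X15 (fun v : Fin 7 => v = 3 ∨ v = 4) (fun v => @instDecidableOr _ _ (instDecidableEqFin 7 v 3) (instDecidableEqFin 7 v 4)) m τ v

def ep1 : Fin 9 → Fin 7 := ![0, 4, 1, 1, 2, 3, 4, 5, 4]
def ep2 : Fin 9 → Fin 7 := ![1, 0, 2, 2, 3, 4, 5, 6, 6]

lemma cov_ends (m : ℕ) (j : Fin 9) (τ : Fin m) :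
    (Cov m).ends (j, τ) = s(L m τ (ep1 j), L m τ (ep2 j)) := by
  show Sym2.map _ (X15.ends j) = _
  have h : X15.ends j = s(ep1 j, ep2 j) := by fin_cases j <;> rfl
  rw [h, Sym2.map_pair_eq]; rfl

lemma L_fst (m : ℕ) (τ : Fin m) (v : Fin 7) : (L m τ v).1 = v := rfl

lemma L_ram3 (m : ℕ) (τ τ' : Fin m) : L m τ 3 = L m τ' 3 := rfl
lemma L_ram4 (m : ℕ) (τ τ' : Fin m) : L m τ 4 = L m τ' 4 := rfl

def shx {m : ℕ} (hm : 0 < m) (x : (Cov m).V) : Fin m :=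
  if h : ((x.1 : Fin 7) = 3 ∨ (x.1 : Fin 7) = 4) then ⟨0, hm⟩
  else ⟨(x.2 : ℕ), x.2.2.trans_eq (if_neg h)⟩

lemma L_canon {m : ℕ} (hm : 0 < m) (x : (Cov m).V) : L m (shx hm x) x.1 = x := by
  obtain ⟨v, k⟩ := x
  by_cases h : (v : Fin 7) = 3 ∨ v = 4
  · rcases h with h | h <;> subst h
    · refine Sigma.ext rfl (heq_of_eq (Fin.ext ?_))
      have h2 : (k : ℕ) < 1 := by simpa using k.2
      show ((L m (shx hm ⟨(3 : Fin 7), k⟩) (3 : Fin 7)).2 : ℕ) = (k : ℕ)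
      have h3 : ((L m (shx hm ⟨(3 : Fin 7), k⟩) (3 : Fin 7)).2 : ℕ) = 0 := rfl
      omega
    · refine Sigma.ext rfl (heq_of_eq (Fin.ext ?_))
      have h2 : (k : ℕ) < 1 := by simpa using k.2
      show ((L m (shx hm ⟨(4 : Fin 7), k⟩) (4 : Fin 7)).2 : ℕ) = (k : ℕ)
      have h3 : ((L m (shx hm ⟨(4 : Fin 7), k⟩) (4 : Fin 7)).2 : ℕ) = 0 := rfl
      omega
  · refine Sigma.ext rfl (heq_of_eq (Fin.ext ?_))
    show ((L m (shx hm ⟨v, k⟩) v).2 : ℕ) = (k : ℕ)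
    simp [L, coverLift, h, shx]

lemma shx_L {m : ℕ} (hm : 0 < m) (τ : Fin m) (v : Fin 7) (h : ¬(v = 3 ∨ v = 4)) :
    shx hm (L m τ v) = τ := by
  apply Fin.ext
  simp [shx, L, coverLift, h]

lemma Bcanon {m : ℕ} (hm : 0 < m) (B : Fin m → Fin 7 → Bool)
    (h3 : ∀ τ τ' : Fin m, B τ 3 = B τ' 3) (h4 : ∀ τ τ' : Fin m, B τ 4 = B τ' 4)
    (τ : Fin m) (v : Fin 7) :
    B (shx hm (L m τ v)) (L m τ v).1 = B τ v := by
  rw [L_fst]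
  by_cases h : v = 3 ∨ v = 4
  · rcases h with h | h
    · subst h; exact h3 _ _
    · subst h; exact h4 _ _
  · rw [shx_L hm τ v h]

lemma sep {m : ℕ} (hm : 0 < m) {S : Set (Cov m).E} (B : Fin m → Fin 7 → Bool)
    (h3 : ∀ τ τ' : Fin m, B τ 3 = B τ' 3) (h4 : ∀ τ τ' : Fin m, B τ 4 = B τ' 4)
    (hloc : ∀ (j : Fin 9) (τ : Fin m), (j, τ) ∈ S → B τ (ep1 j) = B τ (ep2 j))
    {x y : (Cov m).V} (h : (Cov m).Reach S x y) :
    B (shx hm x) x.1 = B (shx hm y) y.1 := by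
  induction h with
  | refl => rfl
  | tail _ hstep ih =>
    rename_i b c _
    rcases hstep with ⟨⟨j, τ⟩, heS, hends⟩
    rw [cov_ends] at hends
    rcases Sym2.eq_iff.mp hends.symm with ⟨h1, h2⟩ | ⟨h1, h2⟩ <;> subst h1 <;> subst h2 <;>
      rw [ih, Bcanon hm B h3 h4, Bcanon hm B h3 h4]
    · exact hloc j τ heS
    · exact (hloc j τ heS).symm

set_option maxRecDepth 100000

abbrev Code := Fin 9 → Bool
def triCnt (c : Code) : ℕ := (c 6).toNat + (c 7).toNat + (c 8).toNat
def miss (c : Code) : ℕ := (!c 4).toNat + (!(c 2 || c 3)).toNat + (!c 0).toNat + (!c 1).toNat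
abbrev OKc (c : Code) : Prop := triCnt c = 2 ∧ ¬(c 2 = true ∧ c 3 = true) ∧ miss c ≤ 1
def bridges (c : Code) : ℕ := (c 5).toNat + (if miss c = 0 then 1 else 0)
def cnt (c : Code) : ℕ := (Finset.univ.filter (fun j => c j = true)).card

def code {m : ℕ} (S : Finset (Cov m).E) : Fin m → Code := fun τ j => decide ((j, τ) ∈ S)

def Good {m : ℕ} (f : Fin m → Code) : Prop :=
  (∀ τ, OKc (f τ)) ∧ ∃ σ, bridges (f σ) = 1 ∧ ∀ τ, τ ≠ σ → bridges (f τ) = 0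

lemma code_mem {m : ℕ} {S : Finset (Cov m).E} {τ : Fin m} {j : Fin 9}
    (h : code S τ j = true) : (j, τ) ∈ S := of_decide_eq_true h

lemma stepc {m : ℕ} {S : Finset (Cov m).E} {τ : Fin m} {j : Fin 9}
    (h : code S τ j = true) :
    (Cov m).Reach ↑S (L m τ (ep1 j)) (L m τ (ep2 j)) :=
  reach_single (Finset.mem_coe.mpr (code_mem h)) (cov_ends m j τ)

lemma stepc' {m : ℕ} {S : Finset (Cov m).E} {τ : Fin m} {j : Fin 9}
    (h : code S τ j = true) :
    (Cov m).Reach ↑S (L m τ (ep2 j)) (L m τ (ep1 j)) := reach_symm (stepc h)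

section Conn

variable {m : ℕ} {S : Finset (Cov m).E}

lemma connV5 (hOK : ∀ τ, OKc (code S τ))
    (hbr : ∃ σ : Fin m, bridges (code S σ) = 1) :
    ∀ (τ : Fin m) (v : Fin 7), (Cov m).Reach ↑S (L m τ v) (L m τ 4) := by
  obtain ⟨σ, hσ⟩ := hbr
  have e6 : ∀ c : Code, bridges c = 1 →
      c 5 = true ∨ (c 4 = true ∧ (c 2 = true ∨ c 3 = true) ∧ c 0 = true ∧ c 1 = true) := by
    decide
  -- the bridge
  have hbridge : ∀ τ : Fin m, (Cov m).Reach ↑S (L m τ 3) (L m τ 4) := by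
    intro τ
    have h34 : (Cov m).Reach ↑S (L m σ 3) (L m σ 4) := by
      rcases e6 _ hσ with h5 | ⟨h4, hb, h0, h1⟩
      · exact stepc h5
      · rcases hb with h2 | h3
        · exact reach_trans (stepc' h4) (reach_trans (stepc' h2)
            (reach_trans (stepc' h0) (stepc' h1)))
        · exact reach_trans (stepc' h4) (reach_trans (stepc' h3)
            (reach_trans (stepc' h0) (stepc' h1)))
    have h3 : L m τ 3 = L m σ 3 := L_ram3 m τ σ
    have h4 : L m τ 4 = L m σ 4 := L_ram4 m τ σ
    rw [h3, h4]
    exact h34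
  intro τ v
  have c := hOK τ
  fin_cases v
  -- v = 0 : v₁
  · by_cases h1 : code S τ 1 = true
    · exact stepc' h1
    · have e1 : ∀ c : Code, OKc c → c 1 = false →
          (c 0 = true ∧ (c 2 = true ∨ c 3 = true) ∧ c 4 = true) := by decide
      obtain ⟨h0, hb, h4⟩ := e1 _ c (by simpa using h1)
      have hseg : (Cov m).Reach ↑S (L m τ 0) (L m τ 3) := by
        rcases hb with h2 | h3
        · exact reach_trans (stepc h0) (reach_trans (stepc h2) (stepc h4))
        · exact reach_trans (stepc h0) (reach_trans (stepc h3) (stepc h4))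
      exact reach_trans hseg (hbridge τ)
  -- v = 1 : v₂
  · by_cases hbc : ((code S τ 2 = true ∨ code S τ 3 = true) ∧ code S τ 4 = true)
    · obtain ⟨hb, h4⟩ := hbc
      have hseg : (Cov m).Reach ↑S (L m τ 1) (L m τ 3) := by
        rcases hb with h2 | h3
        · exact reach_trans (stepc h2) (stepc h4)
        · exact reach_trans (stepc h3) (stepc h4)
      exact reach_trans hseg (hbridge τ)
    · have e2 : ∀ c : Code, OKc c → ¬((c 2 = true ∨ c 3 = true) ∧ c 4 = true) →
          (c 0 = true ∧ c 1 = true) := by decide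
      obtain ⟨h0, h1⟩ := e2 _ c hbc
      exact reach_trans (stepc' h0) (stepc' h1)
  -- v = 2 : v₃
  · by_cases h4 : code S τ 4 = true
    · exact reach_trans (stepc h4) (hbridge τ)
    · have e3 : ∀ c : Code, OKc c → c 4 = false →
          ((c 2 = true ∨ c 3 = true) ∧ c 0 = true ∧ c 1 = true) := by decide
      obtain ⟨hb, h0, h1⟩ := e3 _ c (by simpa using h4)
      have hseg : (Cov m).Reach ↑S (L m τ 2) (L m τ 0) := by
        rcases hb with h2 | h3
        · exact reach_trans (stepc' h2) (stepc' h0)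
        · exact reach_trans (stepc' h3) (stepc' h0)
      exact reach_trans hseg (stepc' h1)
  -- v = 3 : v₄
  · exact hbridge τ
  -- v = 4 : v₅
  · exact Relation.ReflTransGen.refl
  -- v = 5 : v₆
  · by_cases h6 : code S τ 6 = true
    · exact stepc' h6
    · have e4 : ∀ c : Code, OKc c → c 6 = false → (c 7 = true ∧ c 8 = true) := by decide
      obtain ⟨h7, h8⟩ := e4 _ c (by simpa using h6)
      exact reach_trans (stepc h7) (stepc' h8)
  -- v = 6 : v₇
  · by_cases h8 : code S τ 8 = true
    · exact stepc' h8
    · have e5 : ∀ c : Code, OKc c → c 8 = false → (c 6 = true ∧ c 7 = true) := by decide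
      obtain ⟨h6, h7⟩ := e5 _ c (by simpa using h8)
      exact reach_trans (stepc' h7) (stepc' h6)

lemma spanning_of_good (hm : 0 < m) (hOK : ∀ τ, OKc (code S τ))
    (hbr : ∃ σ : Fin m, bridges (code S σ) = 1) :
    ∀ x y : (Cov m).V, (Cov m).Reach ↑S x y := by
  intro x y
  have hx := connV5 hOK hbr (shx hm x) x.1
  have hy := connV5 hOK hbr (shx hm y) y.1
  rw [L_canon hm x] at hx
  rw [L_canon hm y] at hy
  have h4 : L m (shx hm x) 4 = L m (shx hm y) 4 := L_ram4 m _ _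
  rw [h4] at hx
  exact reach_trans hx (reach_symm hy)

end Conn

section Card

variable {m : ℕ}

lemma card_V (m : ℕ) : Fintype.card (Cov m).V = 5 * m + 2 := by
  show Fintype.card (Σ v : Fin 7, Fin (if (v = 3 ∨ v = 4) then 1 else m)) = 5 * m + 2
  rw [Fintype.card_sigma]
  rw [Fin.sum_univ_seven]
  simp only [Fintype.card_fin]
  rw [if_neg (by decide : ¬((0:Fin 7) = 3 ∨ (0:Fin 7) = 4)),
     if_neg (by decide : ¬((1:Fin 7) = 3 ∨ (1:Fin 7) = 4)),
     if_neg (by decide : ¬((2:Fin 7) = 3 ∨ (2:Fin 7) = 4)),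
     if_pos (Or.inl trivial),
     if_pos (Or.inr trivial),
     if_neg (by decide : ¬((5:Fin 7) = 3 ∨ (5:Fin 7) = 4)),
     if_neg (by decide : ¬((6:Fin 7) = 3 ∨ (6:Fin 7) = 4))]
  ring

lemma card_S {S : Finset (Cov m).E} : S.card = ∑ τ : Fin m, cnt (code S τ) := by
  classical
  rw [Finset.card_eq_sum_card_fiberwise (f := Prod.snd) (t := Finset.univ)
    (fun x _ => Finset.mem_univ _)]
  refine Finset.sum_congr rfl (fun τ _ => ?_)
  refine Finset.card_bij' (fun e _ => e.1) (fun j _ => (j, τ)) ?_ ?_ ?_ ?_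
  · rintro ⟨j, τ'⟩ he
    simp only [Finset.mem_filter] at he ⊢
    obtain ⟨h1, h2⟩ := he
    subst h2
    exact ⟨Finset.mem_univ _, decide_eq_true h1⟩
  · intro j hj
    simp only [Finset.mem_filter] at hj ⊢
    exact ⟨code_mem hj.2, trivial⟩
  · rintro ⟨j, τ'⟩ he
    simp only [Finset.mem_filter] at he
    obtain ⟨h1, h2⟩ := he
    subst h2
    rfl
  · intro j hj
    rfl

lemma card_S_of_good {S : Finset (Cov m).E} (hOK : ∀ τ, OKc (code S τ))
    {σ : Fin m} (hσ : bridges (code S σ) = 1)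
    (hrest : ∀ τ, τ ≠ σ → bridges (code S τ) = 0) : S.card = 5 * m + 1 := by
  have d7 : ∀ c : Code, OKc c → bridges c = 0 → cnt c = 5 := by decide
  have d8 : ∀ c : Code, OKc c → bridges c = 1 → cnt c = 6 := by decide
  rw [card_S]
  have : ∀ τ : Fin m, cnt (code S τ) = 5 + (if τ = σ then 1 else 0) := by
    intro τ
    by_cases h : τ = σ
    · subst h; rw [d8 _ (hOK τ) hσ, if_pos rfl]
    · rw [d7 _ (hOK τ) (hrest τ h), if_neg h]
  rw [Finset.sum_congr rfl (fun τ _ => this τ), Finset.sum_add_distrib]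
  rw [Finset.sum_const, Finset.sum_ite_eq' Finset.univ σ (fun _ => 1)]
  simp [Finset.card_univ, mul_comm]

lemma spanningTree_of_good (hm : 0 < m) {S : Finset (Cov m).E}
    (hG : Good (code S)) : (Cov m).IsSpanningTree S := by
  obtain ⟨hOK, σ, hσ, hrest⟩ := hG
  have hspan := spanning_of_good hm hOK ⟨σ, hσ⟩
  haveI : Nonempty (Cov m).V := ⟨L m ⟨0, hm⟩ 0⟩
  refine ⟨Multigraph.isForest_of_spanning_card S hspan ?_, hspan⟩
  rw [card_V, card_S_of_good hOK hσ hrest]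

end Card

section Forward

variable {m : ℕ} {S : Finset (Cov m).E}

lemma strand (hm : 0 < m) (hC : ∀ x y : (Cov m).V, (Cov m).Reach ↑S x y)
    (τ : Fin m) (ind : Fin 7 → Bool) (h3 : ind 3 = false) (h4 : ind 4 = false)
    (hloc : ∀ j : Fin 9, code S τ j = true → ind (ep1 j) = ind (ep2 j))
    (v : Fin 7) (hv : ind v = true) : False := by
  set B : Fin m → Fin 7 → Bool := fun σ w => (decide (σ = τ)) && ind w with hB
  have hB3 : ∀ σ σ' : Fin m, B σ 3 = B σ' 3 := by intro σ σ'; simp [hB, h3]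
  have hB4 : ∀ σ σ' : Fin m, B σ 4 = B σ' 4 := by intro σ σ'; simp [hB, h4]
  have hloc' : ∀ (j : Fin 9) (σ : Fin m), ((j, σ) : (Cov m).E) ∈ (↑S : Set (Cov m).E) →
      B σ (ep1 j) = B σ (ep2 j) := by
    intro j σ hjσ
    by_cases hσ : σ = τ
    · subst hσ
      have := hloc j (decide_eq_true (Finset.mem_coe.mp hjσ))
      simp [hB, this]
    · simp [hB, hσ]
  have hkey := sep hm B hB3 hB4 hloc' (hC (L m τ v) (L m τ 4))
  rw [Bcanon hm B hB3 hB4, Bcanon hm B hB3 hB4] at hkey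
  simp [hB, hv, h4] at hkey

lemma pne1 {j j' : Fin 9} {τ τ' : Fin m} (h : j ≠ j') :
    ((j, τ) : (Cov m).E) ≠ (j', τ') := fun he => h (congrArg Prod.fst he)

lemma pne2 {j j' : Fin 9} {τ τ' : Fin m} (h : τ ≠ τ') :
    ((j, τ) : (Cov m).E) ≠ (j', τ') := fun he => h (congrArg Prod.snd he)

lemma stepd {e' : (Cov m).E} {τ : Fin m} {j : Fin 9}
    (h : code S τ j = true) (hne : ((j, τ) : (Cov m).E) ≠ e') :
    (Cov m).Reach ((↑S : Set (Cov m).E) \ {e'}) (L m τ (ep1 j)) (L m τ (ep2 j)) :=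
  reach_single ⟨Finset.mem_coe.mpr (code_mem h), hne⟩ (cov_ends m j τ)

lemma stepd' {e' : (Cov m).E} {τ : Fin m} {j : Fin 9}
    (h : code S τ j = true) (hne : ((j, τ) : (Cov m).E) ≠ e') :
    (Cov m).Reach ((↑S : Set (Cov m).E) \ {e'}) (L m τ (ep2 j)) (L m τ (ep1 j)) :=
  reach_symm (stepd h hne)

lemma tri2 (hm : 0 < m) (hF : (Cov m).IsForest S)
    (hC : ∀ x y : (Cov m).V, (Cov m).Reach ↑S x y) (τ : Fin m) :
    triCnt (code S τ) = 2 := by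
  by_contra hne
  have dd : ∀ c : Code, triCnt c ≠ 2 →
      (c 6 = true ∧ c 7 = true ∧ c 8 = true) ∨
      (c 6 = false ∧ c 7 = false) ∨ (c 7 = false ∧ c 8 = false) ∨
      (c 6 = false ∧ c 8 = false) := by decide
  rcases dd _ hne with ⟨h6, h7, h8⟩ | ⟨h6, h7⟩ | ⟨h7, h8⟩ | ⟨h6, h8⟩
  · -- cycle in the triangle
    refine hF (6, τ) (code_mem h6) (L m τ 4) (L m τ 5) (cov_ends m 6 τ) ?_
    exact reach_trans (stepd h8 (pne1 (by decide))) (stepd' h7 (pne1 (by decide)))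
  · refine strand hm hC τ ![false, false, false, false, false, true, false] rfl rfl ?_ 5 rfl
    have : ∀ c : Code, c 6 = false → c 7 = false → ∀ j : Fin 9, c j = true →
        (![false, false, false, false, false, true, false] : Fin 7 → Bool) (ep1 j) =
        ![false, false, false, false, false, true, false] (ep2 j) := by decide
    exact this _ h6 h7
  · refine strand hm hC τ ![false, false, false, false, false, false, true] rfl rfl ?_ 6 rfl
    have : ∀ c : Code, c 7 = false → c 8 = false → ∀ j : Fin 9, c j = true →
        (![false, false, false, false, false, false, true] : Fin 7 → Bool) (ep1 j) =
        ![false, false, false, false, false, false, true] (ep2 j) := by decide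
    exact this _ h7 h8
  · refine strand hm hC τ ![false, false, false, false, false, true, true] rfl rfl ?_ 5 rfl
    have : ∀ c : Code, c 6 = false → c 8 = false → ∀ j : Fin 9, c j = true →
        (![false, false, false, false, false, true, true] : Fin 7 → Bool) (ep1 j) =
        ![false, false, false, false, false, true, true] (ep2 j) := by decide
    exact this _ h6 h8

lemma noDouble (hF : (Cov m).IsForest S) (τ : Fin m) :
    ¬(code S τ 2 = true ∧ code S τ 3 = true) := by
  rintro ⟨h2, h3⟩
  refine hF (2, τ) (code_mem h2) (L m τ 1) (L m τ 2) (cov_ends m 2 τ) ?_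
  exact stepd h3 (pne1 (by decide))

lemma missLe1 (hm : 0 < m) (hC : ∀ x y : (Cov m).V, (Cov m).Reach ↑S x y) (τ : Fin m) :
    miss (code S τ) ≤ 1 := by
  by_contra hge
  have dd : ∀ c : Code, ¬(miss c ≤ 1) →
      (c 4 = false ∧ (c 2 || c 3) = false) ∨ (c 4 = false ∧ c 0 = false) ∨
      (c 4 = false ∧ c 1 = false) ∨ ((c 2 || c 3) = false ∧ c 0 = false) ∨
      ((c 2 || c 3) = false ∧ c 1 = false) ∨ (c 0 = false ∧ c 1 = false) := by decide
  rcases dd _ hge with ⟨ha, hb⟩ | ⟨ha, hb⟩ | ⟨ha, hb⟩ | ⟨ha, hb⟩ | ⟨ha, hb⟩ | ⟨ha, hb⟩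
  · refine strand hm hC τ ![false, false, true, false, false, false, false] rfl rfl ?_ 2 rfl
    have : ∀ c : Code, c 4 = false → (c 2 || c 3) = false → ∀ j : Fin 9, c j = true →
        (![false, false, true, false, false, false, false] : Fin 7 → Bool) (ep1 j) =
        ![false, false, true, false, false, false, false] (ep2 j) := by decide
    exact this _ ha hb
  · refine strand hm hC τ ![false, true, true, false, false, false, false] rfl rfl ?_ 2 rfl
    have : ∀ c : Code, c 4 = false → c 0 = false → ∀ j : Fin 9, c j = true →
        (![false, true, true, false, false, false, false] : Fin 7 → Bool) (ep1 j) =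
        ![false, true, true, false, false, false, false] (ep2 j) := by decide
    exact this _ ha hb
  · refine strand hm hC τ ![true, true, true, false, false, false, false] rfl rfl ?_ 0 rfl
    have : ∀ c : Code, c 4 = false → c 1 = false → ∀ j : Fin 9, c j = true →
        (![true, true, true, false, false, false, false] : Fin 7 → Bool) (ep1 j) =
        ![true, true, true, false, false, false, false] (ep2 j) := by decide
    exact this _ ha hb
  · refine strand hm hC τ ![false, true, false, false, false, false, false] rfl rfl ?_ 1 rfl
    have : ∀ c : Code, (c 2 || c 3) = false → c 0 = false → ∀ j : Fin 9, c j = true →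
        (![false, true, false, false, false, false, false] : Fin 7 → Bool) (ep1 j) =
        ![false, true, false, false, false, false, false] (ep2 j) := by decide
    exact this _ ha hb
  · refine strand hm hC τ ![true, true, false, false, false, false, false] rfl rfl ?_ 0 rfl
    have : ∀ c : Code, (c 2 || c 3) = false → c 1 = false → ∀ j : Fin 9, c j = true →
        (![true, true, false, false, false, false, false] : Fin 7 → Bool) (ep1 j) =
        ![true, true, false, false, false, false, false] (ep2 j) := by decide
    exact this _ ha hb
  · refine strand hm hC τ ![true, false, false, false, false, false, false] rfl rfl ?_ 0 rfl
    have : ∀ c : Code, c 0 = false → c 1 = false → ∀ j : Fin 9, c j = true →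
        (![true, false, false, false, false, false, false] : Fin 7 → Bool) (ep1 j) =
        ![true, false, false, false, false, false, false] (ep2 j) := by decide
    exact this _ ha hb

end Forward

section Forward2

variable {m : ℕ} {S : Finset (Cov m).E}

def sideB (c : Code) : Fin 7 → Bool :=
  ![c 4 && (c 2 || c 3) && c 0, c 4 && (c 2 || c 3), c 4, true, false, false, false]

lemma exists_bridge (hm : 0 < m) (hC : ∀ x y : (Cov m).V, (Cov m).Reach ↑S x y)
    (hOK : ∀ τ, OKc (code S τ)) : ∃ σ, bridges (code S σ) ≠ 0 := by
  by_contra hno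
  push_neg at hno
  set B : Fin m → Fin 7 → Bool := fun σ => sideB (code S σ) with hB
  have hB3 : ∀ σ σ' : Fin m, B σ 3 = B σ' 3 := fun _ _ => rfl
  have hB4 : ∀ σ σ' : Fin m, B σ 4 = B σ' 4 := fun _ _ => rfl
  have hloc : ∀ (j : Fin 9) (σ : Fin m), ((j, σ) : (Cov m).E) ∈ (↑S : Set (Cov m).E) →
      B σ (ep1 j) = B σ (ep2 j) := by
    intro j σ hjσ
    have dd : ∀ c : Code, OKc c → bridges c = 0 → ∀ j : Fin 9, c j = true →
        sideB c (ep1 j) = sideB c (ep2 j) := by decide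
    exact dd _ (hOK σ) (hno σ) j (decide_eq_true (Finset.mem_coe.mp hjσ))
  have hkey := sep hm B hB3 hB4 hloc (hC (L m ⟨0, hm⟩ 3) (L m ⟨0, hm⟩ 4))
  rw [Bcanon hm B hB3 hB4, Bcanon hm B hB3 hB4] at hkey
  simp [hB, sideB] at hkey

lemma slots_of_miss {c : Code} (h : miss c = 0) :
    c 4 = true ∧ (c 2 = true ∨ c 3 = true) ∧ c 0 = true ∧ c 1 = true := by
  revert h
  have dd : ∀ c : Code, miss c = 0 →
      (c 4 = true ∧ (c 2 = true ∨ c 3 = true) ∧ c 0 = true ∧ c 1 = true) := by decide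
  exact dd c

lemma U1 (hF : (Cov m).IsForest S) {σ τ : Fin m} (hne : τ ≠ σ)
    (h5 : code S σ 5 = true) (h5' : code S τ 5 = true) : False := by
  refine hF (5, σ) (code_mem h5) (L m σ 3) (L m σ 4) (cov_ends m 5 σ) ?_
  rw [L_ram3 m σ τ, L_ram4 m σ τ]
  exact stepd h5' (pne2 hne)

lemma U2 (hF : (Cov m).IsForest S) (σ τ : Fin m)
    (h5 : code S σ 5 = true) (hτ : miss (code S τ) = 0) : False := by
  obtain ⟨h4, hb, h0, h1⟩ := slots_of_miss hτ
  refine hF (5, σ) (code_mem h5) (L m σ 3) (L m σ 4) (cov_ends m 5 σ) ?_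
  rw [L_ram3 m σ τ, L_ram4 m σ τ]
  rcases hb with h2 | h2 <;>
    exact reach_trans (stepd' h4 (pne1 (by decide))) (reach_trans (stepd' h2 (pne1 (by decide)))
      (reach_trans (stepd' h0 (pne1 (by decide))) (stepd' h1 (pne1 (by decide)))))
lemma U3 (hF : (Cov m).IsForest S) {σ τ : Fin m} (hne : τ ≠ σ)
    (hσ : miss (code S σ) = 0) (hτ : miss (code S τ) = 0) : False := by
  obtain ⟨h4, hb, h0, h1⟩ := slots_of_miss hσ
  obtain ⟨g4, gb, g0, g1⟩ := slots_of_miss hτ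
  refine hF (4, σ) (code_mem h4) (L m σ 2) (L m σ 3) (cov_ends m 4 σ) ?_
  have part1 : (Cov m).Reach ((↑S : Set (Cov m).E) \ {(4, σ)}) (L m σ 2) (L m τ 4) := by
    have h45 : L m σ 4 = L m τ 4 := L_ram4 m σ τ
    rw [← h45]
    rcases hb with h2 | h2 <;>
      exact reach_trans (stepd' h2 (pne1 (by decide)))
        (reach_trans (stepd' h0 (pne1 (by decide))) (stepd' h1 (pne1 (by decide))))
  have part2 : (Cov m).Reach ((↑S : Set (Cov m).E) \ {(4, σ)}) (L m τ 4) (L m σ 3) := by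
    have h33 : L m τ 3 = L m σ 3 := L_ram3 m τ σ
    rw [← h33]
    rcases gb with g2 | g2 <;>
      exact reach_trans (stepd g1 (pne2 hne)) (reach_trans (stepd g0 (pne2 hne))
        (reach_trans (stepd g2 (pne2 hne)) (stepd g4 (pne2 hne))))
  exact reach_trans part1 part2

lemma good_of_tree (hm : 0 < m) (hT : (Cov m).IsSpanningTree S) : Good (code S) := by
  obtain ⟨hF, hC⟩ := hT
  have hOK : ∀ τ, OKc (code S τ) := fun τ =>
    ⟨tri2 hm hF hC τ, noDouble hF τ, missLe1 hm hC τ⟩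
  obtain ⟨σ, hσ⟩ := exists_bridge hm hC hOK
  have hb : code S σ 5 = true ∨ miss (code S σ) = 0 := by
    have dd : ∀ c : Code, bridges c ≠ 0 → c 5 = true ∨ miss c = 0 := by decide
    exact dd _ hσ
  have hmain : bridges (code S σ) = 1 ∧ ∀ τ, τ ≠ σ → bridges (code S τ) = 0 := by
    rcases hb with h5 | hp
    · have hmiss : ∀ τ, miss (code S τ) ≠ 0 := fun τ h => U2 hF σ τ h5 h
      constructor
      · simp [bridges, h5, if_neg (hmiss σ)]
      · intro τ hτ
        have h5τ : code S τ 5 = false := by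
          by_contra h
          exact U1 hF hτ h5 (by simpa using h)
        simp [bridges, h5τ, if_neg (hmiss τ)]
    · have h5f : code S σ 5 = false := by
        by_contra h
        exact U2 hF σ σ (by simpa using h) hp
      constructor
      · simp [bridges, h5f, if_pos hp]
      · intro τ hτ
        have hmτ : miss (code S τ) ≠ 0 := fun h => U3 hF hτ hp h
        have h5τ : code S τ 5 = false := by
          by_contra h
          exact U2 hF τ σ (by simpa using h) hp
        simp [bridges, h5τ, if_neg hmτ]
  exact ⟨hOK, σ, hmain.1, hmain.2⟩

theorem char (hm : 0 < m) (S : Finset (Cov m).E) :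
    (Cov m).IsSpanningTree S ↔ Good (code S) :=
  ⟨good_of_tree hm, spanningTree_of_good hm⟩

end Forward2

section Count

variable {m : ℕ}

def codeEquiv (m : ℕ) : Finset (Cov m).E ≃ (Fin m → Code) where
  toFun := code
  invFun := fun f => Finset.univ.filter (fun e => f e.2 e.1 = true)
  left_inv := by
    intro S
    ext ⟨j, τ⟩
    simp [code]
  right_inv := by
    intro f
    funext τ j
    simp [code]

def Bset : Finset Code := Finset.univ.filter (fun c => OKc c ∧ bridges c = 1)
def Nset : Finset Code := Finset.univ.filter (fun c => OKc c ∧ bridges c = 0)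

lemma Bset_card : Bset.card = 27 := by decide
lemma Nset_card : Nset.card = 21 := by decide

theorem count_main (hm : 0 < m) : (Cov m).treeCount = m * 27 * 21 ^ (m - 1) := by
  classical
  unfold Multigraph.treeCount
  rw [Nat.card_congr (Equiv.subtypeEquiv (codeEquiv m) (fun S => char hm S))]
  rw [Nat.card_eq_fintype_card, Fintype.card_subtype]
  have hset : Finset.univ.filter (Good (m := m)) =
      Finset.univ.biUnion (fun σ : Fin m =>
        Fintype.piFinset (fun τ => if τ = σ then Bset else Nset)) := by
    ext f
    simp only [Finset.mem_filter, Finset.mem_univ, true_and, Finset.mem_biUnion,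
      Fintype.mem_piFinset]
    constructor
    · rintro ⟨hOK, σ, hσ, hrest⟩
      refine ⟨σ, fun τ => ?_⟩
      by_cases h : τ = σ
      · subst h
        rw [if_pos rfl]
        exact Finset.mem_filter.mpr ⟨Finset.mem_univ _, hOK τ, hσ⟩
      · rw [if_neg h]
        exact Finset.mem_filter.mpr ⟨Finset.mem_univ _, hOK τ, hrest τ h⟩
    · rintro ⟨σ, hf⟩
      have hOK : ∀ τ, OKc (f τ) := by
        intro τ
        have := hf τ
        by_cases h : τ = σ
        · rw [if_pos h] at this
          exact (Finset.mem_filter.mp this).2.1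
        · rw [if_neg h] at this
          exact (Finset.mem_filter.mp this).2.1
      refine ⟨hOK, σ, ?_, ?_⟩
      · have := hf σ
        rw [if_pos rfl] at this
        exact (Finset.mem_filter.mp this).2.2
      · intro τ hτ
        have := hf τ
        rw [if_neg hτ] at this
        exact (Finset.mem_filter.mp this).2.2
  rw [hset, Finset.card_biUnion]
  · have hone : ∀ σ : Fin m,
        (Fintype.piFinset (fun τ => if τ = σ then Bset else Nset)).card = 27 * 21 ^ (m - 1) := by
      intro σ
      rw [Fintype.card_piFinset]
      have : ∀ τ : Fin m, (if τ = σ then Bset else Nset).card = if τ = σ then 27 else 21 := by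
        intro τ
        by_cases h : τ = σ
        · rw [if_pos h, if_pos h, Bset_card]
        · rw [if_neg h, if_neg h, Nset_card]
      rw [Finset.prod_congr rfl (fun τ _ => this τ)]
      rw [← Finset.mul_prod_erase Finset.univ _ (Finset.mem_univ σ), if_pos rfl]
      have : ∀ τ ∈ Finset.univ.erase σ, (if τ = σ then 27 else 21) = 21 := by
        intro τ hτ
        rw [if_neg (Finset.mem_erase.mp hτ).1]
      rw [Finset.prod_congr rfl this, Finset.prod_const, Finset.card_erase_of_mem (Finset.mem_univ σ)]
      simp
    rw [Finset.sum_congr rfl (fun σ _ => hone σ), Finset.sum_const]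
    simp only [Finset.card_univ, Fintype.card_fin, smul_eq_mul]
    ring
  · intro σ₁ _ σ₂ _ hne
    rw [Function.onFun, Finset.disjoint_left]
    intro f h1 h2
    have g1 := Fintype.mem_piFinset.mp h1 σ₂
    have g2 := Fintype.mem_piFinset.mp h2 σ₂
    rw [if_neg (Ne.symm hne)] at g1
    rw [if_pos rfl] at g2
    have b1 := (Finset.mem_filter.mp g1).2.2
    have b2 := (Finset.mem_filter.mp g2).2.2
    rw [b1] at b2
    exact absurd b2 (by norm_num)

end Count

/-- For every prime `p` and `n ≥ 0`, the `n`-th layer `X_n` of the degree-`p^n` cyclic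
branched cover of `X` with trivial voltage assignment, totally ramified exactly at `v₄`
and `v₅`, has exactly `p^n · 27 · 21^{p^n − 1}` spanning trees. -/
theorem stmt_15 (p n : ℕ) (hp : p.Prime) :
    (@trivialCover X15 (fun v : Fin 7 => v = 3 ∨ v = 4)
      (fun v => @instDecidableOr _ _ (instDecidableEqFin 7 v 3) (instDecidableEqFin 7 v 4)) (p ^ n)).treeCount =
      p ^ n * 27 * 21 ^ (p ^ n - 1) := by
  have hm : 0 < p ^ n := pow_pos hp.pos n
  exact count_main hm
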